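/- Let R be an algebraic curvature tensor on a Lorentzian vector space V (signature (1,q), dimension ≥ 3). If trace{J_R(x)²} = 0 for every complex null vector x, then R has constant sectional curvature, i.e. there exists a constant c with R(x,y,z,w) = c{(x,w)(y,z) - (x,z)(y,w)} for all x,y,z,w. -/

import Mathlib

set_option maxHeartbeats 4000000

private lemma erase_reduce1 {n : ℕ} [NeZero n] (εf : Fin n → ℝ) (hε0 : εf 0 = -1)
    (hε1 : ∀ x, x ≠ 0 → εf x = 1) (i : Fin n) (hi : i ≠ 0)
    (g : Fin n → ℝ) (hg : g 0 = g i) :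
    ∑ x, εf x * g x = ∑ x ∈ (Finset.univ.erase 0).erase i, g x := by
  have h0 : ∑ x, εf x * g x
      = εf 0 * g 0 + ∑ x ∈ Finset.univ.erase 0, εf x * g x :=
    (Finset.add_sum_erase _ _ (Finset.mem_univ 0)).symm
  have hi' : i ∈ Finset.univ.erase 0 := Finset.mem_erase.2 ⟨hi, Finset.mem_univ i⟩
  have h1 : ∑ x ∈ Finset.univ.erase 0, εf x * g x
      = εf i * g i + ∑ x ∈ (Finset.univ.erase 0).erase i, εf x * g x :=
    (Finset.add_sum_erase _ _ hi').symm
  have h2 : ∑ x ∈ (Finset.univ.erase 0).erase i, εf x * g x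
      = ∑ x ∈ (Finset.univ.erase 0).erase i, g x := by
    refine Finset.sum_congr rfl fun x hx => ?_
    rcases Finset.mem_erase.1 hx with ⟨hxi, hx0⟩
    rcases Finset.mem_erase.1 hx0 with ⟨hx0', _⟩
    rw [hε1 x hx0', one_mul]
  rw [h0, h1, h2, hε0, hε1 i hi, hg]; ring

private lemma erase_reduce2 {n : ℕ} [NeZero n] (εf : Fin n → ℝ)
    (hε1 : ∀ x, x ≠ 0 → εf x = 1) (i j : Fin n) (hij : i ≠ j)
    (hi : i ≠ 0) (hj : j ≠ 0) (g : Fin n → ℝ) (hg : g i = -g j) :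
    ∑ x, εf x * g x = ∑ x ∈ (Finset.univ.erase i).erase j, εf x * g x := by
  have h0 : ∑ x, εf x * g x
      = εf i * g i + ∑ x ∈ Finset.univ.erase i, εf x * g x :=
    (Finset.add_sum_erase _ _ (Finset.mem_univ i)).symm
  have hj' : j ∈ Finset.univ.erase i := Finset.mem_erase.2 ⟨(Ne.symm hij), Finset.mem_univ j⟩
  have h1 : ∑ x ∈ Finset.univ.erase i, εf x * g x
      = εf j * g j + ∑ x ∈ (Finset.univ.erase i).erase j, εf x * g x :=
    (Finset.add_sum_erase _ _ hj').symm
  rw [h0, h1, hε1 i hi, hε1 j hj, hg]; ring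

private lemma erase_reduce3 {n : ℕ} [NeZero n] (εf : Fin n → ℝ) (hε0 : εf 0 = -1)
    (hε1 : ∀ x, x ≠ 0 → εf x = 1) (i j : Fin n) (hij : i ≠ j)
    (hi : i ≠ 0) (hj : j ≠ 0) (f : Fin n → ℝ)
    (hcol : 5*f 0 + 3*f i + 4*f j = 0) :
    ∑ x, εf x * (f x)^2
      = ((4*f i - 3*f j)/5)^2
        + ∑ x ∈ ((Finset.univ.erase 0).erase i).erase j, (f x)^2 := by
  have h0 : ∑ x, εf x * (f x)^2
      = εf 0 * (f 0)^2 + ∑ x ∈ Finset.univ.erase 0, εf x * (f x)^2 :=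
    (Finset.add_sum_erase _ _ (Finset.mem_univ 0)).symm
  have hi' : i ∈ Finset.univ.erase 0 := Finset.mem_erase.2 ⟨hi, Finset.mem_univ i⟩
  have h1 : ∑ x ∈ Finset.univ.erase 0, εf x * (f x)^2
      = εf i * (f i)^2 + ∑ x ∈ (Finset.univ.erase 0).erase i, εf x * (f x)^2 :=
    (Finset.add_sum_erase _ _ hi').symm
  have hj' : j ∈ (Finset.univ.erase 0).erase i :=
    Finset.mem_erase.2 ⟨(Ne.symm hij), Finset.mem_erase.2 ⟨hj, Finset.mem_univ j⟩⟩
  have h2 : ∑ x ∈ (Finset.univ.erase 0).erase i, εf x * (f x)^2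
      = εf j * (f j)^2
        + ∑ x ∈ ((Finset.univ.erase 0).erase i).erase j, εf x * (f x)^2 :=
    (Finset.add_sum_erase _ _ hj').symm
  have h3 : ∑ x ∈ ((Finset.univ.erase 0).erase i).erase j, εf x * (f x)^2
      = ∑ x ∈ ((Finset.univ.erase 0).erase i).erase j, (f x)^2 := by
    refine Finset.sum_congr rfl fun x hx => ?_
    rcases Finset.mem_erase.1 hx with ⟨hxj, hx1⟩
    rcases Finset.mem_erase.1 hx1 with ⟨hxi, hx0⟩
    rcases Finset.mem_erase.1 hx0 with ⟨hx0', _⟩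
    rw [hε1 x hx0', one_mul]
  rw [h0, h1, h2, h3, hε0, hε1 i hi, hε1 j hj]
  linear_combination ((3*f i + 4*f j - 5*f 0)/25) * hcol

private lemma re_part_zero {x y : ℝ} (h : (x:ℂ) + (y:ℂ) * Complex.I = 0) : x = 0 := by
  have := congrArg Complex.re h
  simpa using this

private lemma sos_zero {n : ℕ} (S T : Finset (Fin n)) (f : Fin n → Fin n → ℝ)
    (h : ∑ a ∈ S, ∑ b ∈ T, (f a b)^2 = 0) : ∀ a ∈ S, ∀ b ∈ T, f a b = 0 := by
  intro a ha b hb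
  have h1 : ∀ x ∈ S, ∑ b ∈ T, (f x b)^2 = 0 := by
    rw [← Finset.sum_eq_zero_iff_of_nonneg (fun x _ => Finset.sum_nonneg fun b _ => sq_nonneg _)]
    exact h
  have h2 := h1 a ha
  rw [Finset.sum_eq_zero_iff_of_nonneg (fun b _ => sq_nonneg _)] at h2
  exact pow_eq_zero_iff (two_ne_zero) |>.1 (h2 b hb)

private noncomputable def inner2qm {V : Type*} [AddCommGroup V] [Module ℂ V]
    (B : LinearMap.BilinForm ℂ V) (c : ℂ) (x y : V) : V →ₗ[ℂ] V →ₗ[ℂ] ℂ where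
  toFun z :=
  { toFun := fun w => c * (B x w * B y z - B x z * B y w)
    map_add' := by intro w₁ w₂; simp only [map_add]; ring
    map_smul' := by intro m w; simp only [map_smul, smul_eq_mul, RingHom.id_apply]; ring }
  map_add' := by
    intro z₁ z₂; refine LinearMap.ext fun w => ?_
    simp only [LinearMap.coe_mk, AddHom.coe_mk, LinearMap.add_apply, map_add]; ring
  map_smul' := by
    intro m z; refine LinearMap.ext fun w => ?_
    simp only [LinearMap.coe_mk, AddHom.coe_mk, LinearMap.smul_apply, map_smul,
      smul_eq_mul, RingHom.id_apply]; ring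

private lemma inner2qm_apply {V : Type*} [AddCommGroup V] [Module ℂ V]
    (B : LinearMap.BilinForm ℂ V) (c : ℂ) (x y z w : V) :
    inner2qm B c x y z w = c * (B x w * B y z - B x z * B y w) := rfl

private noncomputable def inner3qm {V : Type*} [AddCommGroup V] [Module ℂ V]
    (B : LinearMap.BilinForm ℂ V) (c : ℂ) (x : V) : V →ₗ[ℂ] V →ₗ[ℂ] V →ₗ[ℂ] ℂ where
  toFun y := inner2qm B c x y
  map_add' := by
    intro y₁ y₂; refine LinearMap.ext fun z => LinearMap.ext fun w => ?_
    simp only [LinearMap.add_apply, inner2qm_apply, map_add, LinearMap.add_apply]; ring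
  map_smul' := by
    intro m y; refine LinearMap.ext fun z => LinearMap.ext fun w => ?_
    simp only [LinearMap.smul_apply, inner2qm_apply, map_smul, LinearMap.smul_apply,
      smul_eq_mul, RingHom.id_apply]; ring

private noncomputable def quadMap {V : Type*} [AddCommGroup V] [Module ℂ V]
    (B : LinearMap.BilinForm ℂ V) (c : ℂ) : V →ₗ[ℂ] V →ₗ[ℂ] V →ₗ[ℂ] V →ₗ[ℂ] ℂ where
  toFun x := inner3qm B c x
  map_add' := by
    intro x₁ x₂; refine LinearMap.ext fun y => LinearMap.ext fun z => LinearMap.ext fun w => ?_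
    show inner2qm B c (x₁ + x₂) y z w = inner2qm B c x₁ y z w + inner2qm B c x₂ y z w
    simp only [inner2qm_apply, map_add, LinearMap.add_apply]; ring
  map_smul' := by
    intro m x; refine LinearMap.ext fun y => LinearMap.ext fun z => LinearMap.ext fun w => ?_
    show inner2qm B c (m • x) y z w = m * inner2qm B c x y z w
    simp only [inner2qm_apply, map_smul, LinearMap.smul_apply, smul_eq_mul]; ring

private lemma quadMap_apply {V : Type*} [AddCommGroup V] [Module ℂ V]
    (B : LinearMap.BilinForm ℂ V) (c : ℂ) (x y z w : V) :
    quadMap B c x y z w = c * (B x w * B y z - B x z * B y w) := rfl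

/-- If `trace{J_R(x)²} = 0` for every complex null vector `x`, where `R` is (the
complexification of) a Lorentzian algebraic curvature tensor, then `R` has constant
sectional curvature.  The complexification is modelled as a complex vector space `V`
with a complex-bilinear symmetric form admitting a basis `e` with `(e₀,e₀) = -1`,
`(eᵢ,eᵢ) = 1`, the reality of `R` being expressed by its values on the basis being
real. -/
theorem lorentz_null_trace_sq_implies_constant_curvature
    (V : Type*) [AddCommGroup V] [Module ℂ V] [FiniteDimensional ℂ V]
    (q : ℕ) (hq : 2 ≤ q)
    (B : LinearMap.BilinForm ℂ V) (hBsymm : ∀ x y, B x y = B y x)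
    (e : Module.Basis (Fin (q + 1)) ℂ V)
    (hBe : ∀ i j, B (e i) (e j) =
      if i = j then (if i = 0 then (-1 : ℂ) else 1) else 0)
    (R : V →ₗ[ℂ] V →ₗ[ℂ] V →ₗ[ℂ] V →ₗ[ℂ] ℂ)
    (hR1 : ∀ x y z w, R x y z w = R z w x y)
    (hR2 : ∀ x y z w, R x y z w = - R y x z w)
    (hR3 : ∀ x y z w, R x y z w + R y z x w + R z x y w = 0)
    (hRreal : ∀ i j k l, ∃ r : ℝ, R (e i) (e j) (e k) (e l) = (r : ℂ))
    (J : V → Module.End ℂ V)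
    (hJ : ∀ x y w, B (J x y) w = R y x x w)
    (hnull : ∀ x : V, B x x = 0 → LinearMap.trace ℂ V ((J x) ^ 2) = 0) :
    ∃ c : ℝ, ∀ x y z w, R x y z w = (c : ℂ) * (B x w * B y z - B x z * B y w) := by
  classical
  -- the sign function
  set εr : Fin (q+1) → ℝ := fun a => if a = 0 then (-1:ℝ) else 1 with hεrdef
  have hε0 : εr 0 = -1 := by simp [hεrdef]
  have hε1 : ∀ x, x ≠ 0 → εr x = 1 := by intro x hx; simp [hεrdef, hx]
  have hε2 : ∀ a, ((εr a : ℝ):ℂ) * ((εr a : ℝ):ℂ) = 1 := by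
    intro a; by_cases h : a = 0 <;> simp [hεrdef, h]
  -- coordinates via B
  have hrepr : ∀ (v : V) (a : Fin (q+1)), e.repr v a = ((εr a : ℝ):ℂ) * B v (e a) := by
    intro v a
    have hB : B v (e a) = e.repr v a * ((εr a : ℝ):ℂ) := by
      conv_lhs => rw [← Module.Basis.sum_repr e v]
      rw [map_sum, LinearMap.sum_apply]
      simp only [map_smul, LinearMap.smul_apply, smul_eq_mul]
      rw [Finset.sum_eq_single a]
      · rw [hBe a a, if_pos rfl]
        by_cases h : a = 0 <;> simp [hεrdef, h]
      · intro c _ hca; rw [hBe c a, if_neg hca, mul_zero]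
      · intro h; exact absurd (Finset.mem_univ a) h
    rw [hB, ← mul_assoc, mul_comm ((εr a : ℝ):ℂ) _, mul_assoc, hε2, mul_one]
  -- derived symmetries of R
  have h4 : ∀ x y z w, R x y z w = - R x y w z := by
    intro x y z w; rw [hR1 x y z w, hR2 z w x y, hR1 w z x y]
  have hswap : ∀ x z y, R x z z y = R y z z x := by
    intro x z y
    calc R x z z y = R z y x z := hR1 _ _ _ _
    _ = - R y z x z := hR2 _ _ _ _
    _ = R y z z x := by rw [h4 y z x z]; ring
  -- the trace formula
  have TR : ∀ z : V, LinearMap.trace ℂ V ((J z)^2)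
      = ∑ a, ∑ b, ((εr a : ℝ):ℂ) * ((εr b : ℝ):ℂ) * (R (e a) z z (e b))^2 := by
    intro z
    rw [LinearMap.trace_eq_matrix_trace ℂ e ((J z)^2), Matrix.trace]
    simp only [Matrix.diag, LinearMap.toMatrix_apply]
    refine Finset.sum_congr rfl fun a _ => ?_
    rw [pow_two, Module.End.mul_apply, hrepr, hJ]
    have hJv : J z (e a) = ∑ b, (((εr b : ℝ):ℂ) * R (e a) z z (e b)) • e b := by
      conv_lhs => rw [← Module.Basis.sum_repr e (J z (e a))]
      refine Finset.sum_congr rfl fun b _ => ?_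
      rw [hrepr, hJ]
    rw [hJv, map_sum, LinearMap.sum_apply, LinearMap.sum_apply, LinearMap.sum_apply,
      Finset.mul_sum]
    refine Finset.sum_congr rfl fun b _ => ?_
    simp only [map_smul, LinearMap.smul_apply, smul_eq_mul]
    rw [hswap (e b) z (e a)]
    ring
  have hP : ∀ z : V, B z z = 0 →
      ∑ a, ∑ b, ((εr a : ℝ):ℂ) * ((εr b : ℝ):ℂ) * (R (e a) z z (e b))^2 = 0 := by
    intro z hz; rw [← TR z]; exact hnull z hz
  -- real components
  choose ρ hρ using hRreal
  have c1 : ∀ a b c d, ρ a b c d = ρ c d a b := by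
    intro a b c d
    have h := hR1 (e a) (e b) (e c) (e d); rw [hρ, hρ] at h; exact_mod_cast h
  have c2 : ∀ a b c d, ρ a b c d = - ρ b a c d := by
    intro a b c d
    have h := hR2 (e a) (e b) (e c) (e d); rw [hρ, hρ] at h; exact_mod_cast h
  have c4 : ∀ a b c d, ρ a b c d = - ρ a b d c := by
    intro a b c d
    have h := h4 (e a) (e b) (e c) (e d); rw [hρ, hρ] at h; exact_mod_cast h
  have c3 : ∀ a b c d, ρ a b c d + ρ b c a d + ρ c a b d = 0 := by
    intro a b c d
    have h := hR3 (e a) (e b) (e c) (e d); rw [hρ, hρ, hρ] at h; exact_mod_cast h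
  have czz : ∀ x c d, ρ x x c d = 0 := by
    intro x c d
    have h := c2 x x c d; linarith
  have czzl : ∀ x c d, ρ x c d d = 0 := by
    intro x c d
    have h := c4 x c d d; linarith
  have cswap : ∀ x z y, ρ x z z y = ρ y z z x := by
    intro x z y
    have h := hswap (e x) (e z) (e y); rw [hρ, hρ] at h; exact_mod_cast h
  have cpair : ∀ x y, ρ x y y x = ρ y x x y := fun x y => c1 x y y x
  -- ===== Shape 1 : null vectors e0 ± ei =====
  have MAIN1 : ∀ (s : ℝ), s^2 = 1 → ∀ (i : Fin (q+1)), i ≠ 0 →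
      ∀ a b : Fin (q+1), a ≠ 0 → a ≠ i → b ≠ 0 → b ≠ i →
      ρ a 0 0 b + s * ρ a 0 i b + s * ρ a i 0 b + s^2 * ρ a i i b = 0 := by
    intro s hs i hi
    have hs' : ((s:ℝ):ℂ)^2 = 1 := by exact_mod_cast congrArg (Complex.ofReal) hs
    have hnullZ : B (e 0 + (s:ℂ) • e i) (e 0 + (s:ℂ) • e i) = 0 := by
      have hexp : B (e 0 + (s:ℂ) • e i) (e 0 + (s:ℂ) • e i)
          = B (e 0) (e 0) + (s:ℂ) * B (e 0) (e i) + (s:ℂ) * B (e i) (e 0)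
            + (s:ℂ)*(s:ℂ)*B (e i) (e i) := by
        simp only [map_add, map_smul, LinearMap.add_apply, LinearMap.smul_apply, smul_eq_mul]
        ring
      rw [hexp, hBe 0 0, hBe 0 i, hBe i 0, hBe i i, if_pos rfl, if_pos rfl,
        if_neg (Ne.symm hi), if_neg hi, if_pos rfl, if_neg hi]
      linear_combination hs'
    set F : Fin (q+1) → Fin (q+1) → ℝ := fun a b =>
      ρ a 0 0 b + s * ρ a 0 i b + s * ρ a i 0 b + s^2 * ρ a i i b with hF
    have hM : ∀ a b, R (e a) (e 0 + (s:ℂ) • e i) (e 0 + (s:ℂ) • e i) (e b)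
        = ((F a b : ℝ) : ℂ) := by
      intro a b
      have hexp : R (e a) (e 0 + (s:ℂ) • e i) (e 0 + (s:ℂ) • e i) (e b)
          = R (e a) (e 0) (e 0) (e b) + (s:ℂ) * R (e a) (e 0) (e i) (e b)
            + (s:ℂ) * R (e a) (e i) (e 0) (e b) + (s:ℂ)*(s:ℂ)* R (e a) (e i) (e i) (e b) := by
        simp only [map_add, map_smul, LinearMap.add_apply, LinearMap.smul_apply, smul_eq_mul]
        ring
      rw [hexp, hρ, hρ, hρ, hρ, hF]; push_cast; ring
    have hreal : ∑ a, ∑ b, εr a * εr b * (F a b)^2 = 0 := by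
      have h0 := hP _ hnullZ
      have hcast : ∑ a, ∑ b, ((εr a:ℝ):ℂ) * ((εr b:ℝ):ℂ)
            * (R (e a) (e 0 + (s:ℂ) • e i) (e 0 + (s:ℂ) • e i) (e b))^2
          = ((∑ a, ∑ b, εr a * εr b * (F a b)^2 : ℝ) : ℂ) := by
        push_cast
        refine Finset.sum_congr rfl fun a _ => Finset.sum_congr rfl fun b _ => ?_
        rw [hM a b] <;> push_cast <;> ring
      rw [hcast] at h0; exact_mod_cast h0
    have hFcol : ∀ a, F a 0 + s * F a i = 0 := by
      intro a; simp only [hF]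
      linear_combination czzl a 0 0 + s * c4 a 0 i 0 + s * czzl a i 0 + s^2 * c4 a i i 0
        + s^2 * czzl a 0 i + s^3 * czzl a i i
    have hFrow : ∀ b, F 0 b + s * F i b = 0 := by
      intro b; simp only [hF]
      linear_combination czz 0 0 b + s * czz 0 i b + s * c2 i 0 0 b + s^2 * c2 i 0 i b
        + s^2 * czz i 0 b + s^3 * czz i i b
    have hstep1 : ∀ a, ∑ b, εr b * (F a b)^2
        = ∑ b ∈ (Finset.univ.erase 0).erase i, (F a b)^2 := by
      intro a
      refine erase_reduce1 εr hε0 hε1 i hi (fun b => (F a b)^2) ?_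
      linear_combination (F a 0 - s * F a i) * hFcol a + (F a i)^2 * hs
    have hstep2 : ∑ a, εr a * (∑ b ∈ (Finset.univ.erase 0).erase i, (F a b)^2)
        = ∑ a ∈ (Finset.univ.erase 0).erase i,
            ∑ b ∈ (Finset.univ.erase 0).erase i, (F a b)^2 := by
      refine erase_reduce1 εr hε0 hε1 i hi _ ?_
      refine Finset.sum_congr rfl fun b _ => ?_
      linear_combination (F 0 b - s * F i b) * hFrow b + (F i b)^2 * hs
    have hdouble : ∑ a ∈ (Finset.univ.erase 0).erase i,
        ∑ b ∈ (Finset.univ.erase 0).erase i, (F a b)^2 = 0 := by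
      rw [← hstep2]
      have : ∑ a, εr a * (∑ b ∈ (Finset.univ.erase 0).erase i, (F a b)^2)
          = ∑ a, ∑ b, εr a * εr b * (F a b)^2 := by
        refine Finset.sum_congr rfl fun a _ => ?_
        rw [← hstep1 a, Finset.mul_sum]
        refine Finset.sum_congr rfl fun b _ => ?_
        ring
      rw [this, hreal]
    intro a b ha0 hai hb0 hbi
    have hmem : ∀ x : Fin (q+1), x ≠ 0 → x ≠ i → x ∈ (Finset.univ.erase 0).erase i :=
      fun x hx0 hxi => Finset.mem_erase.2 ⟨hxi, Finset.mem_erase.2 ⟨hx0, Finset.mem_univ x⟩⟩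
    have := sos_zero _ _ F hdouble a (hmem a ha0 hai) b (hmem b hb0 hbi)
    simp only [hF] at this
    linarith
  have A1 : ∀ (i : Fin (q+1)), i ≠ 0 → ∀ a b : Fin (q+1), a ≠ 0 → a ≠ i → b ≠ 0 → b ≠ i →
      ρ a 0 0 b + ρ a i i b = 0 := by
    intro i hi a b ha0 hai hb0 hbi
    have h1 := MAIN1 1 (by norm_num) i hi a b ha0 hai hb0 hbi
    have h2 := MAIN1 (-1) (by norm_num) i hi a b ha0 hai hb0 hbi
    norm_num at h1 h2
    linarith
  have A2 : ∀ (i : Fin (q+1)), i ≠ 0 → ∀ a b : Fin (q+1), a ≠ 0 → a ≠ i → b ≠ 0 → b ≠ i →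
      ρ a 0 i b + ρ a i 0 b = 0 := by
    intro i hi a b ha0 hai hb0 hbi
    have h1 := MAIN1 1 (by norm_num) i hi a b ha0 hai hb0 hbi
    have h2 := MAIN1 (-1) (by norm_num) i hi a b ha0 hai hb0 hbi
    norm_num at h1 h2
    linarith
  -- basic index facts
  have h10 : (1 : Fin (q+1)) ≠ 0 := by
    intro h
    have h1 : ((1 : Fin (q+1)) : ℕ) = 1 := by
      rw [Fin.val_one']; exact Nat.mod_eq_of_lt (by omega)
    have h2 := congrArg Fin.val h
    rw [h1] at h2; simp at h2
  -- κ and basic curvature values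
  have F1fact : ∀ a : Fin (q+1), a ≠ 0 → ρ a 0 0 a = ρ 1 0 0 1 := by
    intro a ha0
    by_cases ha1 : a = 1
    · rw [ha1]
    · have e1 := A1 1 h10 a a ha0 ha1 ha0 ha1
      have e2 := A1 a ha0 1 1 h10 (Ne.symm ha1) h10 (Ne.symm ha1)
      have e3 := cpair a 1
      linarith
  have F2fact : ∀ a i : Fin (q+1), a ≠ 0 → i ≠ 0 → a ≠ i → ρ a i i a = -(ρ 1 0 0 1) := by
    intro a i ha0 hi0 hai
    have e1 := A1 i hi0 a a ha0 hai ha0 hai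
    have e2 := F1fact a ha0
    linarith
  have FactD : ∀ i j : Fin (q+1), i ≠ 0 → j ≠ 0 → i ≠ j → ρ 0 j j i = 0 := by
    intro i j hi hj hij
    have h := A2 i hi j j hj (Ne.symm hij) hj (Ne.symm hij)
    have e1 := c1 j 0 i j
    have e2 := c4 i j j 0
    have e3 := c1 i j 0 j
    have e4 := c4 0 j i j
    have e5 := c1 j i 0 j
    linarith
  have FactE : ∀ x y z : Fin (q+1), x ≠ 0 → y ≠ 0 → z ≠ 0 → x ≠ y → x ≠ z → y ≠ z →
      ρ 0 x y z = 0 := by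
    have cyc : ∀ a i b : Fin (q+1), a ≠ 0 → i ≠ 0 → b ≠ 0 → a ≠ i → a ≠ b → i ≠ b →
        ρ 0 b a i = ρ 0 a i b := by
      intro a i b ha0 hi0 hb0 hai hab hib
      have h := A2 i hi0 a b ha0 hai hb0 (Ne.symm hib)
      have e1 := c1 a 0 i b
      have e2 := c4 i b a 0
      have e3 := c1 i b 0 a
      have e4 := c1 a i 0 b
      linarith
    have bia : ∀ x y z : Fin (q+1), ρ 0 x y z + ρ 0 z x y - ρ 0 y x z = 0 := by
      intro x y z
      have h := c3 x y 0 z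
      have e1 := c1 x y 0 z
      have e2 := c2 y 0 x z
      have e3 := c3 0 x y z
      have e4 := c1 x y 0 z
      linarith [c3 0 x y z, c1 x y 0 z, c2 y 0 x z]
    intro x y z hx hy hz hxy hxz hyz
    have b1 := bia x y z
    have b2 := bia y x z
    have cy1 := cyc x y z hx hy hz hxy hxz hyz
    have cy2 := cyc y x z hy hx hz (Ne.symm hxy) hyz hxz
    linarith
  -- ===== Shape 3 : null vector 5e0 + 3ei + 4ej =====
  have FactF : ∀ (i j a b : Fin (q+1)), i ≠ 0 → j ≠ 0 → i ≠ j →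
      a ≠ 0 → a ≠ i → a ≠ j → b ≠ 0 → b ≠ i → b ≠ j →
      ρ a i j b + ρ a j i b = 0 := by
    intro i j a b hi hj hij ha0 hai haj hb0 hbi hbj
    have hji : j ≠ i := Ne.symm hij
    set F3 : Fin (q+1) → Fin (q+1) → ℝ := fun x y =>
      25*ρ x 0 0 y + 15*ρ x 0 i y + 20*ρ x 0 j y + 15*ρ x i 0 y + 9*ρ x i i y
        + 12*ρ x i j y + 20*ρ x j 0 y + 12*ρ x j i y + 16*ρ x j j y with hF3
    have hnull3 : B ((5:ℂ) • e 0 + (3:ℂ) • e i + (4:ℂ) • e j)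
        ((5:ℂ) • e 0 + (3:ℂ) • e i + (4:ℂ) • e j) = 0 := by
      have hexp : B ((5:ℂ) • e 0 + (3:ℂ) • e i + (4:ℂ) • e j)
          ((5:ℂ) • e 0 + (3:ℂ) • e i + (4:ℂ) • e j)
          = 25 * B (e 0) (e 0) + 15 * B (e 0) (e i) + 20 * B (e 0) (e j)
            + 15 * B (e i) (e 0) + 9 * B (e i) (e i) + 12 * B (e i) (e j)
            + 20 * B (e j) (e 0) + 12 * B (e j) (e i) + 16 * B (e j) (e j) := by
        simp only [map_add, map_smul, LinearMap.add_apply, LinearMap.smul_apply, smul_eq_mul]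
        ring
      rw [hexp]
      norm_num [hBe, hi, hj, hij, hji, Ne.symm hi, Ne.symm hj]
    have hM3 : ∀ x y, R (e x) ((5:ℂ) • e 0 + (3:ℂ) • e i + (4:ℂ) • e j)
        ((5:ℂ) • e 0 + (3:ℂ) • e i + (4:ℂ) • e j) (e y) = ((F3 x y : ℝ) : ℂ) := by
      intro x y
      have hexp : R (e x) ((5:ℂ) • e 0 + (3:ℂ) • e i + (4:ℂ) • e j)
          ((5:ℂ) • e 0 + (3:ℂ) • e i + (4:ℂ) • e j) (e y)
          = 25 * R (e x) (e 0) (e 0) (e y) + 15 * R (e x) (e 0) (e i) (e y)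
            + 20 * R (e x) (e 0) (e j) (e y) + 15 * R (e x) (e i) (e 0) (e y)
            + 9 * R (e x) (e i) (e i) (e y) + 12 * R (e x) (e i) (e j) (e y)
            + 20 * R (e x) (e j) (e 0) (e y) + 12 * R (e x) (e j) (e i) (e y)
            + 16 * R (e x) (e j) (e j) (e y) := by
        simp only [map_add, map_smul, LinearMap.add_apply, LinearMap.smul_apply, smul_eq_mul]
        ring
      rw [hexp]; simp only [hρ, hF3]; push_cast; ring
    have hreal3 : ∑ x, ∑ y, εr x * εr y * (F3 x y)^2 = 0 := by
      have h0 := hP _ hnull3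
      have hcast : ∑ x, ∑ y, ((εr x:ℝ):ℂ) * ((εr y:ℝ):ℂ)
            * (R (e x) ((5:ℂ) • e 0 + (3:ℂ) • e i + (4:ℂ) • e j)
                ((5:ℂ) • e 0 + (3:ℂ) • e i + (4:ℂ) • e j) (e y))^2
          = ((∑ x, ∑ y, εr x * εr y * (F3 x y)^2 : ℝ) : ℂ) := by
        push_cast
        refine Finset.sum_congr rfl fun x _ => Finset.sum_congr rfl fun y _ => ?_
        rw [hM3 x y] <;> push_cast <;> ring
      rw [hcast] at h0; exact_mod_cast h0
    have hcol3 : ∀ x, 5*F3 x 0 + 3*F3 x i + 4*F3 x j = 0 := by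
      intro x; simp only [hF3]
      linear_combination (75:ℝ) * c4 x 0 0 i + 100 * c4 x 0 0 j + 60 * c4 x 0 i j
        + 45 * c4 x i 0 i + 60 * c4 x i 0 j + 36 * c4 x i i j
        + 60 * c4 x j 0 i + 80 * c4 x j 0 j + 48 * c4 x j i j
        + 125 * czzl x 0 0 + 45 * czzl x 0 i + 80 * czzl x 0 j
        + 75 * czzl x i 0 + 27 * czzl x i i + 48 * czzl x i j
        + 100 * czzl x j 0 + 36 * czzl x j i + 64 * czzl x j j
    have hrow3 : ∀ y, 5*F3 0 y + 3*F3 i y + 4*F3 j y = 0 := by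
      intro y; simp only [hF3]
      linear_combination (75:ℝ) * c2 0 i 0 y + 45 * c2 0 i i y + 60 * c2 0 i j y
        + 100 * c2 0 j 0 y + 60 * c2 0 j i y + 80 * c2 0 j j y
        + 60 * c2 i j 0 y + 36 * c2 i j i y + 48 * c2 i j j y
        + 125 * czz 0 0 y + 75 * czz 0 i y + 100 * czz 0 j y
        + 45 * czz i 0 y + 27 * czz i i y + 36 * czz i j y
        + 80 * czz j 0 y + 48 * czz j i y + 64 * czz j j y
    have hstep1 : ∀ x, ∑ y, εr y * (F3 x y)^2
        = ((4*F3 x i - 3*F3 x j)/5)^2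
          + ∑ y ∈ ((Finset.univ.erase 0).erase i).erase j, (F3 x y)^2 :=
      fun x => erase_reduce3 εr hε0 hε1 i j hij hi hj (F3 x) (hcol3 x)
    have key3 : ∑ y ∈ ((Finset.univ.erase 0).erase i).erase j,
        ∑ x ∈ ((Finset.univ.erase 0).erase i).erase j, (F3 x y)^2 = 0 := by
      have e2 : ∑ x, ∑ y, εr x * εr y * (F3 x y)^2
          = ∑ x, (εr x * ((4*F3 x i - 3*F3 x j)/5)^2
              + εr x * ∑ y ∈ ((Finset.univ.erase 0).erase i).erase j, (F3 x y)^2) := by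
        refine Finset.sum_congr rfl fun x _ => ?_
        have e1 : ∑ y, εr x * εr y * (F3 x y)^2 = εr x * ∑ y, εr y * (F3 x y)^2 := by
          rw [Finset.mul_sum]; exact Finset.sum_congr rfl fun y _ => by ring
        rw [e1, hstep1 x, mul_add]
      have e4 : ∑ x, εr x * ((4*F3 x i - 3*F3 x j)/5)^2
          = ((4*((4*F3 i i - 3*F3 i j)/5) - 3*((4*F3 j i - 3*F3 j j)/5))/5)^2
            + ∑ x ∈ ((Finset.univ.erase 0).erase i).erase j, ((4*F3 x i - 3*F3 x j)/5)^2 := by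
        refine erase_reduce3 εr hε0 hε1 i j hij hi hj (fun x => (4*F3 x i - 3*F3 x j)/5) ?_
        show 5 * ((4*F3 0 i - 3*F3 0 j)/5) + 3 * ((4*F3 i i - 3*F3 i j)/5)
            + 4 * ((4*F3 j i - 3*F3 j j)/5) = 0
        linear_combination (4/5 : ℝ) * hrow3 i - (3/5 : ℝ) * hrow3 j
      have e5 : ∑ x, εr x * ∑ y ∈ ((Finset.univ.erase 0).erase i).erase j, (F3 x y)^2
          = ∑ y ∈ ((Finset.univ.erase 0).erase i).erase j, ∑ x, εr x * (F3 x y)^2 := by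
        calc ∑ x, εr x * ∑ y ∈ ((Finset.univ.erase 0).erase i).erase j, (F3 x y)^2
            = ∑ x, ∑ y ∈ ((Finset.univ.erase 0).erase i).erase j, εr x * (F3 x y)^2 :=
              Finset.sum_congr rfl fun x _ => Finset.mul_sum _ _ _
        _ = ∑ y ∈ ((Finset.univ.erase 0).erase i).erase j, ∑ x, εr x * (F3 x y)^2 :=
              Finset.sum_comm
      have e7 : ∑ y ∈ ((Finset.univ.erase 0).erase i).erase j, ∑ x, εr x * (F3 x y)^2
          = (∑ y ∈ ((Finset.univ.erase 0).erase i).erase j, ((4*F3 i y - 3*F3 j y)/5)^2)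
            + ∑ y ∈ ((Finset.univ.erase 0).erase i).erase j,
                ∑ x ∈ ((Finset.univ.erase 0).erase i).erase j, (F3 x y)^2 := by
        rw [← Finset.sum_add_distrib]
        exact Finset.sum_congr rfl fun y _ =>
          erase_reduce3 εr hε0 hε1 i j hij hi hj (fun x => F3 x y) (hrow3 y)
      have hfin : (0:ℝ)
          = (((4*((4*F3 i i - 3*F3 i j)/5) - 3*((4*F3 j i - 3*F3 j j)/5))/5)^2
              + ∑ x ∈ ((Finset.univ.erase 0).erase i).erase j, ((4*F3 x i - 3*F3 x j)/5)^2)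
            + ((∑ y ∈ ((Finset.univ.erase 0).erase i).erase j, ((4*F3 i y - 3*F3 j y)/5)^2)
              + ∑ y ∈ ((Finset.univ.erase 0).erase i).erase j,
                  ∑ x ∈ ((Finset.univ.erase 0).erase i).erase j, (F3 x y)^2) := by
        calc (0:ℝ) = ∑ x, ∑ y, εr x * εr y * (F3 x y)^2 := hreal3.symm
        _ = ∑ x, (εr x * ((4*F3 x i - 3*F3 x j)/5)^2
              + εr x * ∑ y ∈ ((Finset.univ.erase 0).erase i).erase j, (F3 x y)^2) := e2
        _ = (∑ x, εr x * ((4*F3 x i - 3*F3 x j)/5)^2)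
              + ∑ x, εr x * ∑ y ∈ ((Finset.univ.erase 0).erase i).erase j, (F3 x y)^2 :=
            Finset.sum_add_distrib
        _ = _ := by rw [e4, e5, e7]
      have n1 : (0:ℝ) ≤ ((4*((4*F3 i i - 3*F3 i j)/5) - 3*((4*F3 j i - 3*F3 j j)/5))/5)^2 :=
        sq_nonneg _
      have n2 : (0:ℝ) ≤ ∑ x ∈ ((Finset.univ.erase 0).erase i).erase j,
          ((4*F3 x i - 3*F3 x j)/5)^2 := Finset.sum_nonneg fun x _ => sq_nonneg _
      have n3 : (0:ℝ) ≤ ∑ y ∈ ((Finset.univ.erase 0).erase i).erase j,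
          ((4*F3 i y - 3*F3 j y)/5)^2 := Finset.sum_nonneg fun y _ => sq_nonneg _
      have n4 : (0:ℝ) ≤ ∑ y ∈ ((Finset.univ.erase 0).erase i).erase j,
          ∑ x ∈ ((Finset.univ.erase 0).erase i).erase j, (F3 x y)^2 :=
        Finset.sum_nonneg fun y _ => Finset.sum_nonneg fun x _ => sq_nonneg _
      linarith
    have hmem3 : ∀ x : Fin (q+1), x ≠ 0 → x ≠ i → x ≠ j →
        x ∈ ((Finset.univ.erase 0).erase i).erase j := fun x h0 h1 h2 =>
      Finset.mem_erase.2 ⟨h2, Finset.mem_erase.2 ⟨h1, Finset.mem_erase.2 ⟨h0, Finset.mem_univ x⟩⟩⟩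
    have hF3ab := sos_zero _ _ (fun y x => F3 x y) key3 b (hmem3 b hb0 hbi hbj)
      a (hmem3 a ha0 hai haj)
    simp only [hF3] at hF3ab
    have g1 := A1 i hi a b ha0 hai hb0 hbi
    have g2 := A1 j hj a b ha0 haj hb0 hbj
    have g3 := A2 i hi a b ha0 hai hb0 hbi
    have g4 := A2 j hj a b ha0 haj hb0 hbj
    linarith
  -- ===== Shape 2 : null vector ei + I ej =====
  have ρzero : ∀ i j : Fin (q+1), i ≠ 0 → j ≠ 0 → i ≠ j → ρ i 0 0 j = 0 := by
    intro i j hi hj hij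
    have hji : j ≠ i := Ne.symm hij
    set F2 : Fin (q+1) → Fin (q+1) → ℝ := fun a b => ρ a i i b - ρ a j j b with hF2
    set G2 : Fin (q+1) → Fin (q+1) → ℝ := fun a b => ρ a i j b + ρ a j i b with hG2
    have hnull2 : B (e i + Complex.I • e j) (e i + Complex.I • e j) = 0 := by
      have hexp : B (e i + Complex.I • e j) (e i + Complex.I • e j)
          = B (e i) (e i) + Complex.I * B (e i) (e j) + Complex.I * B (e j) (e i)
            + Complex.I * Complex.I * B (e j) (e j) := by
        simp only [map_add, map_smul, LinearMap.add_apply, LinearMap.smul_apply, smul_eq_mul]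
        ring
      rw [hexp, Complex.I_mul_I]
      norm_num [hBe, hi, hj, hij, hji]
    have hM2 : ∀ a b, R (e a) (e i + Complex.I • e j) (e i + Complex.I • e j) (e b)
        = ((F2 a b : ℝ):ℂ) + ((G2 a b : ℝ):ℂ) * Complex.I := by
      intro a b
      have hexp : R (e a) (e i + Complex.I • e j) (e i + Complex.I • e j) (e b)
          = R (e a) (e i) (e i) (e b) + Complex.I * R (e a) (e i) (e j) (e b)
            + Complex.I * R (e a) (e j) (e i) (e b)
            + Complex.I * Complex.I * R (e a) (e j) (e j) (e b) := by
        simp only [map_add, map_smul, LinearMap.add_apply, LinearMap.smul_apply, smul_eq_mul]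
        ring
      rw [hexp, Complex.I_mul_I]; simp only [hρ, hF2, hG2]; push_cast; ring
    have h0 := hP _ hnull2
    have hsplit : ∑ a, ∑ b, ((εr a:ℝ):ℂ) * ((εr b:ℝ):ℂ)
          * (R (e a) (e i + Complex.I • e j) (e i + Complex.I • e j) (e b))^2
        = ((∑ a, ∑ b, εr a * εr b * ((F2 a b)^2 - (G2 a b)^2) : ℝ):ℂ)
          + ((∑ a, ∑ b, εr a * εr b * (2 * F2 a b * G2 a b) : ℝ):ℂ) * Complex.I := by
      push_cast
      rw [Finset.sum_mul, ← Finset.sum_add_distrib]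
      refine Finset.sum_congr rfl fun a _ => ?_
      rw [Finset.sum_mul, ← Finset.sum_add_distrib]
      refine Finset.sum_congr rfl fun b _ => ?_
      rw [hM2 a b]
      linear_combination (((εr a:ℝ):ℂ) * ((εr b:ℝ):ℂ) * ((G2 a b:ℝ):ℂ)^2) * Complex.I_mul_I
    rw [hsplit] at h0
    have hX : ∑ a, ∑ b, εr a * εr b * ((F2 a b)^2 - (G2 a b)^2) = 0 := re_part_zero h0
    -- vanishing of entries away from (0,0)
    have hFv : ∀ a b : Fin (q+1), a ≠ i → a ≠ j → b ≠ i → b ≠ j → F2 a b = 0 := by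
      intro a b hai haj hbi hbj
      simp only [hF2]
      by_cases ha0 : a = 0
      · subst ha0
        by_cases hb0 : b = 0
        · subst hb0
          have e1 := cpair 0 i
          have e2 := F1fact i hi
          have e3 := cpair 0 j
          have e4 := F1fact j hj
          linarith
        · have e1 := FactD b i hb0 hi hbi
          have e2 := FactD b j hb0 hj hbj
          linarith
      · by_cases hb0 : b = 0
        · subst hb0
          have e1 := cswap a i 0
          have e2 := cswap a j 0
          have e3 := FactD a i ha0 hi hai
          have e4 := FactD a j ha0 hj haj
          linarith
        · by_cases hab : a = b
          · subst hab
            have e1 := F2fact a i ha0 hi hai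
            have e2 := F2fact a j ha0 hj haj
            linarith
          · have e1 := A1 i hi a b ha0 hai hb0 hbi
            have e2 := A1 j hj a b ha0 haj hb0 hbj
            linarith
    have hGv : ∀ a b : Fin (q+1), a ≠ i → a ≠ j → b ≠ i → b ≠ j → ¬(a = 0 ∧ b = 0) →
        G2 a b = 0 := by
      intro a b hai haj hbi hbj hnot
      simp only [hG2]
      by_cases ha0 : a = 0
      · subst ha0
        have hb0 : b ≠ 0 := fun h => hnot ⟨rfl, h⟩
        have e1 := FactE i j b hi hj hb0 hij (Ne.symm hbi) (Ne.symm hbj)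
        have e2 := FactE j i b hj hi hb0 hji (Ne.symm hbj) (Ne.symm hbi)
        linarith
      · by_cases hb0 : b = 0
        · subst hb0
          have e1 := c1 a i j 0
          have e2 := c2 j 0 a i
          have e3 := FactE j a i hj ha0 hi (Ne.symm haj) hji hai
          have e4 := c1 a j i 0
          have e5 := c2 i 0 a j
          have e6 := FactE i a j hi ha0 hj (Ne.symm hai) hij haj
          linarith
        · exact FactF i j a b hi hj hij ha0 hai haj hb0 hbi hbj
    -- reduce the double sum
    have hred1 : ∀ a : Fin (q+1), ∑ b, εr b * ((F2 a b)^2 - (G2 a b)^2)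
        = ∑ b ∈ (Finset.univ.erase i).erase j, εr b * ((F2 a b)^2 - (G2 a b)^2) := by
      intro a
      refine erase_reduce2 εr hε1 i j hij hi hj (fun b => (F2 a b)^2 - (G2 a b)^2) ?_
      show (F2 a i)^2 - (G2 a i)^2 = -((F2 a j)^2 - (G2 a j)^2)
      have e3 : F2 a i = G2 a j := by
        simp only [hF2, hG2]
        have k1 := czzl a i i
        have k2 := czzl a i j
        have k3 := c4 a j i j
        linarith
      have e4 : G2 a i = -F2 a j := by
        simp only [hF2, hG2]
        have k1 := czzl a j i
        have k2 := czzl a j j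
        have k3 := c4 a i i j
        linarith
      rw [e3, e4]; ring
    have hred2 : ∑ a, ∑ b, εr a * εr b * ((F2 a b)^2 - (G2 a b)^2)
        = ∑ a ∈ (Finset.univ.erase i).erase j, εr a
            * ∑ b ∈ (Finset.univ.erase i).erase j, εr b * ((F2 a b)^2 - (G2 a b)^2) := by
      have e0 : ∑ a, ∑ b, εr a * εr b * ((F2 a b)^2 - (G2 a b)^2)
          = ∑ a, εr a * ∑ b, εr b * ((F2 a b)^2 - (G2 a b)^2) := by
        refine Finset.sum_congr rfl fun a _ => ?_
        rw [Finset.mul_sum]; exact Finset.sum_congr rfl fun b _ => by ring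
      rw [e0]
      have := erase_reduce2 εr hε1 i j hij hi hj
        (fun a => ∑ b, εr b * ((F2 a b)^2 - (G2 a b)^2)) ?_
      · rw [this]
        exact Finset.sum_congr rfl fun a _ => by rw [hred1 a]
      · have e3 : ∀ b, F2 i b = G2 j b := by
          intro b; simp only [hF2, hG2]
          have k1 := czz i i b
          have k2 := czz j i b
          have k3 := c2 j i j b
          linarith
        have e4 : ∀ b, G2 i b = -F2 j b := by
          intro b; simp only [hF2, hG2]
          have k1 := czz i j b
          have k2 := czz j j b
          have k3 := c2 j i i b
          linarith
        show ∑ b, εr b * ((F2 i b)^2 - (G2 i b)^2)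
            = -∑ b, εr b * ((F2 j b)^2 - (G2 j b)^2)
        rw [← Finset.sum_neg_distrib]
        refine Finset.sum_congr rfl fun b _ => ?_
        rw [e3 b, e4 b]; ring
    have h0T2 : (0 : Fin (q+1)) ∈ (Finset.univ.erase i).erase j :=
      Finset.mem_erase.2 ⟨Ne.symm hj, Finset.mem_erase.2 ⟨Ne.symm hi, Finset.mem_univ 0⟩⟩
    have hsingle : ∑ a ∈ (Finset.univ.erase i).erase j, εr a
        * ∑ b ∈ (Finset.univ.erase i).erase j, εr b * ((F2 a b)^2 - (G2 a b)^2)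
        = -(G2 0 0)^2 := by
      rw [Finset.sum_eq_single_of_mem 0 h0T2 ?side1]
      · rw [Finset.sum_eq_single_of_mem 0 h0T2 ?side2]
        · rw [hε0, hFv 0 0 (Ne.symm hi) (Ne.symm hj) (Ne.symm hi) (Ne.symm hj)]
          ring
        · intro b hb hbne
          rcases Finset.mem_erase.1 hb with ⟨hbj, hb1⟩
          rcases Finset.mem_erase.1 hb1 with ⟨hbi, _⟩
          rw [hFv 0 b (Ne.symm hi) (Ne.symm hj) hbi hbj,
            hGv 0 b (Ne.symm hi) (Ne.symm hj) hbi hbj (fun hc => hbne hc.2)]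
          ring
      · intro a ha hane
        rcases Finset.mem_erase.1 ha with ⟨haj, ha1⟩
        rcases Finset.mem_erase.1 ha1 with ⟨hai, _⟩
        have : ∑ b ∈ (Finset.univ.erase i).erase j, εr b * ((F2 a b)^2 - (G2 a b)^2) = 0 := by
          refine Finset.sum_eq_zero fun b hb => ?_
          rcases Finset.mem_erase.1 hb with ⟨hbj, hb1⟩
          rcases Finset.mem_erase.1 hb1 with ⟨hbi, _⟩
          rw [hFv a b hai haj hbi hbj, hGv a b hai haj hbi hbj (fun hc => hane hc.1)]
          ring
        rw [this, mul_zero]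
    have hG00 : G2 0 0 = 0 := by
      have : -(G2 0 0)^2 = 0 := by rw [← hsingle, ← hred2, hX]
      nlinarith [sq_nonneg (G2 0 0)]
    have e1 := c1 0 i j 0
    have e2 := c1 0 j i 0
    have e3 := cswap j 0 i
    simp only [hG2] at hG00
    linarith
  -- remaining vanishing facts
  have F6 : ∀ a i b : Fin (q+1), a ≠ 0 → i ≠ 0 → b ≠ 0 → a ≠ b → i ≠ a → i ≠ b →
      ρ a i i b = 0 := by
    intro a i b ha0 hi0 hb0 hab hia hib
    have h1 := A1 i hi0 a b ha0 (Ne.symm hia) hb0 (Ne.symm hib)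
    have h2 := ρzero a b ha0 hb0 hab
    linarith
  have Hrep : ∀ p x y : Fin (q+1), p ≠ x → p ≠ y → x ≠ y → ρ p x p y = 0 := by
    intro p x y hpx hpy hxy
    by_cases hp0 : p = 0
    · subst hp0
      have e1 := c4 0 x 0 y
      have e2 := c1 0 x y 0
      have e3 := ρzero y x (Ne.symm hpy) (Ne.symm hpx) (Ne.symm hxy)
      linarith
    · by_cases hx0 : x = 0
      · subst hx0
        have e1 := c2 p 0 p y
        have e2 := FactD y p (Ne.symm hxy) hp0 (Ne.symm hpy)
        linarith
      · by_cases hy0 : y = 0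
        · subst hy0
          have e1 := c4 p x p 0
          have e2 := c1 p x 0 p
          have e3 := FactD x p hx0 hp0 (Ne.symm hpx)
          linarith
        · have e1 := c2 p x p y
          have e2 := F6 x p y hx0 hp0 hy0 hxy hpx hpy
          linarith
  have F7 : ∀ a b c d : Fin (q+1), a ≠ 0 → b ≠ 0 → c ≠ 0 → d ≠ 0 →
      a ≠ b → a ≠ c → a ≠ d → b ≠ c → b ≠ d → c ≠ d → ρ a b c d = 0 := by
    intro a b c d ha hb hc hd hab hac had hbc hbd hcd
    have i0 := c3 a b c d
    have i1 := FactF c a b d hc ha (Ne.symm hac) hb hbc (Ne.symm hab) hd (Ne.symm hcd) (Ne.symm had)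
    have i2 := c2 b a c d
    have i3 := FactF a b c d ha hb hab hc (Ne.symm hac) (Ne.symm hbc) hd (Ne.symm had) (Ne.symm hbd)
    have i4 := c1 c b a d
    have i5 := FactF d c a b hd hc (Ne.symm hcd) ha had hac hb hbd hbc
    have i6 := c4 a c d b
    have i7 := FactF c b a d hc hb (Ne.symm hbc) ha hac hab hd (Ne.symm hcd) (Ne.symm hbd)
    linarith
  -- ===== the component formula =====
  have hgr0 : ∀ a b : Fin (q+1), a ≠ b → B (e a) (e b) = 0 := by
    intro a b h; rw [hBe, if_neg h]
  have hgrd : ∀ a : Fin (q+1), B (e a) (e a) = ((εr a : ℝ):ℂ) := by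
    intro a; rw [hBe, if_pos rfl]; by_cases h : a = 0 <;> simp [hεrdef, h]
  have HK : ∀ a b : Fin (q+1), a ≠ b → ρ a b b a = -(ρ 1 0 0 1) * εr a * εr b := by
    intro a b hab
    by_cases ha0 : a = 0
    · subst ha0
      have e1 := cpair 0 b
      have e2 := F1fact b (Ne.symm hab)
      rw [hε0, hε1 b (Ne.symm hab)]
      linarith
    · by_cases hb0 : b = 0
      · subst hb0
        have e2 := F1fact a ha0
        rw [hε0, hε1 a ha0]
        linarith
      · have e1 := F2fact a b ha0 hb0 hab
        rw [hε1 a ha0, hε1 b hb0]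
        linarith
  have COMP : ∀ a b c d : Fin (q+1),
      (ρ a b c d : ℂ) = ((-(ρ 1 0 0 1) : ℝ) : ℂ)
        * (B (e a) (e d) * B (e b) (e c) - B (e a) (e c) * B (e b) (e d)) := by
    intro a b c d
    by_cases hab : a = b
    · subst hab
      rw [czz a c d]
      push_cast; ring
    · by_cases hcd : c = d
      · subst hcd
        rw [czzl a b c]
        push_cast; ring
      · by_cases hac : a = c
        · subst hac
          by_cases hbd : b = d
          · subst hbd
            have h1 := c4 a b a b
            have h2 := HK a b hab
            have h3 : ρ a b a b = (ρ 1 0 0 1) * εr a * εr b := by linarith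
            rw [h3, hgr0 a b hab, hgr0 b a (Ne.symm hab), hgrd a, hgrd b]
            push_cast; ring
          · have h3 := Hrep a b d hab hcd hbd
            rw [h3, hgr0 a d hcd, hgr0 b d hbd]
            push_cast; ring
        · by_cases had : a = d
          · subst had
            by_cases hbc : b = c
            · subst hbc
              have h2 := HK a b hab
              rw [h2, hgrd a, hgrd b, hgr0 a b hab, hgr0 b a (Ne.symm hab)]
              push_cast; ring
            · have h1 := c4 a b c a
              have h2 := Hrep a b c hab hac hbc
              have h3 : ρ a b c a = 0 := by linarith
              rw [h3, hgr0 b c hbc, hgr0 a c hac]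
              push_cast; ring
          · by_cases hbc : b = c
            · subst hbc
              have h1 := c2 a b b d
              have h2 := Hrep b a d (Ne.symm hab) hcd had
              have h3 : ρ a b b d = 0 := by linarith
              rw [h3, hgr0 a d had, hgr0 a b hab]
              push_cast; ring
            · by_cases hbd : b = d
              · subst hbd
                have h1 := c2 a b c b
                have h2 := c4 b a c b
                have h3 := Hrep b a c (Ne.symm hab) hbc hac
                have h4 : ρ a b c b = 0 := by linarith
                rw [h4, hgr0 a b hab, hgr0 a c hac]
                push_cast; ring
              · have h0 : ρ a b c d = 0 := by
                  by_cases ha0 : a = 0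
                  · subst ha0
                    exact FactE b c d (Ne.symm hab) (Ne.symm hac) (Ne.symm had) hbc hbd hcd
                  · by_cases hb0 : b = 0
                    · subst hb0
                      have h1 := c2 a 0 c d
                      have h2 := FactE a c d ha0 (Ne.symm hbc) (Ne.symm hbd) hac had hcd
                      linarith
                    · by_cases hc0 : c = 0
                      · subst hc0
                        have h1 := c1 a b 0 d
                        have h2 := FactE d a b (Ne.symm hcd) ha0 hb0 (Ne.symm had)
                          (Ne.symm hbd) hab
                        linarith
                      · by_cases hd0 : d = 0
                        · subst hd0
                          have h1 := c4 a b c 0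
                          have h2 := c1 a b 0 c
                          have h3 := FactE c a b hc0 ha0 hb0 (Ne.symm hac)
                            (Ne.symm hbc) hab
                          linarith
                        · exact F7 a b c d ha0 hb0 hc0 hd0 hab hac had hbc hbd hcd
                rw [h0, hgr0 a d had, hgr0 a c hac]
                push_cast; ring
  -- ===== conclusion =====
  refine ⟨-(ρ 1 0 0 1), ?_⟩
  have hquad : R = quadMap B ((-(ρ 1 0 0 1) : ℝ) : ℂ) := by
    refine e.ext fun a => ?_
    refine Module.Basis.ext e fun b => ?_
    refine Module.Basis.ext e fun c => ?_
    refine Module.Basis.ext e fun d => ?_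
    rw [quadMap_apply, hρ]
    exact COMP a b c d
  intro x y z w
  rw [hquad]
  exact quadMap_apply B _ x y z w
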